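/- For any proper scoring rule S : [0,1] × {0,1} → [0,1] and any sequences p_1,…,p_T ∈ [0,1] (finitely many values) and θ_1,…,θ_T ∈ {0,1}, the Calibration Fixed Decision Loss is bounded by twice the expected calibration error: CFDL_S(p⃗, θ⃗) ≤ 2·ECE(p⃗, θ⃗), where ECE = (1/T)·Σ_i n_i·|q_i − q̂_i|. -/
import Mathlib


/-- For a [0,1]-bounded proper scoring rule, CFDL ≤ 2·ECE. -/
theorem stmt_6 (T m : ℕ) (hT : 0 < T)
    (u g : ℝ → ℝ)
    (hconv : ConvexOn ℝ (Set.Icc (0:ℝ) 1) u)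
    (hsub : ∀ p ∈ Set.Icc (0:ℝ) 1, ∀ r ∈ Set.Icc (0:ℝ) 1, u p + g p * (r - p) ≤ u r)
    (hbdd : ∀ p ∈ Set.Icc (0:ℝ) 1, ∀ θ : ℝ, (θ = 0 ∨ θ = 1) →
      u p + g p * (θ - p) ∈ Set.Icc (0:ℝ) 1)
    (q : Fin m → ℝ) (hq : ∀ i, q i ∈ Set.Icc (0:ℝ) 1)
    (qh : Fin m → ℝ) (hqh : ∀ i, qh i ∈ Set.Icc (0:ℝ) 1)
    (n : Fin m → ℕ) (hsum : ∑ i, n i = T) :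
    (1 / (T:ℝ)) * ∑ i, (n i : ℝ) * (u (qh i) - u (q i) + g (q i) * (q i - qh i))
      ≤ 2 * ((1 / (T:ℝ)) * ∑ i, (n i : ℝ) * |q i - qh i|) := by
  have hg : ∀ p ∈ Set.Icc (0:ℝ) 1, |g p| ≤ 1 := by
    intro p hp
    have h0 := hbdd p hp 0 (Or.inl rfl)
    have h1 := hbdd p hp 1 (Or.inr rfl)
    simp only [Set.mem_Icc] at h0 h1
    rw [abs_le]; constructor <;> nlinarith [h0.1, h0.2, h1.1, h1.2]
  have hterm : ∀ i, (n i : ℝ) * (u (qh i) - u (q i) + g (q i) * (q i - qh i))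
      ≤ (n i : ℝ) * (2 * |q i - qh i|) := by
    intro i
    apply mul_le_mul_of_nonneg_left _ (Nat.cast_nonneg _)
    have h1 := hsub (qh i) (hqh i) (q i) (hq i)
    have hg1 := hg (q i) (hq i)
    have hg2 := hg (qh i) (hqh i)
    have e1 : g (qh i) * (q i - qh i) ≥ -|q i - qh i| := by
      have := abs_mul (g (qh i)) (q i - qh i)
      nlinarith [neg_abs_le (g (qh i) * (q i - qh i)), abs_nonneg (q i - qh i)]
    have e2 : g (q i) * (q i - qh i) ≤ |q i - qh i| := by
      have := abs_mul (g (q i)) (q i - qh i)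
      nlinarith [le_abs_self (g (q i) * (q i - qh i)), abs_nonneg (q i - qh i)]
    nlinarith
  calc (1 / (T:ℝ)) * ∑ i, (n i : ℝ) * (u (qh i) - u (q i) + g (q i) * (q i - qh i))
      ≤ (1 / (T:ℝ)) * ∑ i, (n i : ℝ) * (2 * |q i - qh i|) := by
        apply mul_le_mul_of_nonneg_left (Finset.sum_le_sum fun i _ => hterm i)
        positivity
    _ = 2 * ((1 / (T:ℝ)) * ∑ i, (n i : ℝ) * |q i - qh i|) := by
        rw [Finset.mul_sum, Finset.mul_sum, Finset.mul_sum]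
        exact Finset.sum_congr rfl fun i _ => by ring
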